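/- Let J, R, Q be real n×n matrices with Jᵀ = −J, R positive semidefinite, and Q positive definite. Then every eigenvalue λ ∈ ℂ of the matrix (J − R)Q (viewed as a complex matrix) satisfies Re(λ) ≤ 0. -/

import Mathlib

open Matrix

/-- The complexification of a real matrix. -/
noncomputable def toC {n : ℕ} (A : Matrix (Fin n) (Fin n) ℝ) : Matrix (Fin n) (Fin n) ℂ :=
  A.map (fun a => (a : ℂ))

lemma toC_re {n : ℕ} (A : Matrix (Fin n) (Fin n) ℝ) (x : Fin n → ℂ) :
    (star x ⬝ᵥ (toC A *ᵥ x)).re =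
      (fun i => (x i).re) ⬝ᵥ (A *ᵥ fun i => (x i).re) +
      (fun i => (x i).im) ⬝ᵥ (A *ᵥ fun i => (x i).im) := by
  simp only [dotProduct, mulVec, toC, Matrix.map_apply, Pi.star_apply, Complex.re_sum,
    Finset.mul_sum, Finset.sum_mul, ← Finset.sum_add_distrib]
  apply Finset.sum_congr rfl; intro i _
  apply Finset.sum_congr rfl; intro j _
  simp [Complex.mul_re, Complex.mul_im]
  try ring

lemma toC_im {n : ℕ} (A : Matrix (Fin n) (Fin n) ℝ) (x : Fin n → ℂ) :
    (star x ⬝ᵥ (toC A *ᵥ x)).im =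
      (fun i => (x i).re) ⬝ᵥ (A *ᵥ fun i => (x i).im) -
      (fun i => (x i).im) ⬝ᵥ (A *ᵥ fun i => (x i).re) := by
  simp only [dotProduct, mulVec, toC, Matrix.map_apply, Pi.star_apply, Complex.im_sum,
    Finset.mul_sum, Finset.sum_mul, ← Finset.sum_sub_distrib]
  apply Finset.sum_congr rfl; intro i _
  apply Finset.sum_congr rfl; intro j _
  simp [Complex.mul_re, Complex.mul_im]
  try ring

lemma toC_mul {n : ℕ} (A B : Matrix (Fin n) (Fin n) ℝ) : toC (A * B) = toC A * toC B := by
  ext i j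
  simp [toC, Matrix.mul_apply]

lemma skew_dot {n : ℕ} (J : Matrix (Fin n) (Fin n) ℝ) (hJ : Jᵀ = -J) (v : Fin n → ℝ) :
    v ⬝ᵥ (J *ᵥ v) = 0 := by
  have h : v ⬝ᵥ (J *ᵥ v) = (Jᵀ *ᵥ v) ⬝ᵥ v := by
    rw [Matrix.dotProduct_mulVec, Matrix.mulVec_transpose]
  rw [hJ] at h
  simp only [Matrix.neg_mulVec, neg_dotProduct] at h
  rw [dotProduct_comm (J *ᵥ v) v] at h
  linarith

lemma symm_dot {n : ℕ} (A : Matrix (Fin n) (Fin n) ℝ) (hA : Aᵀ = A) (v w : Fin n → ℝ) :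
    v ⬝ᵥ (A *ᵥ w) = w ⬝ᵥ (A *ᵥ v) := by
  rw [Matrix.dotProduct_mulVec, ← Matrix.mulVec_transpose, hA, dotProduct_comm]

theorem eigenvalues_DH_nonpos_re {n : ℕ} (J R Q : Matrix (Fin n) (Fin n) ℝ)
    (hJ : Jᵀ = -J) (hR : R.PosSemidef) (hQ : Q.PosDef)
    (μ : ℂ) (x : Fin n → ℂ) (hx : x ≠ 0) (heig : toC ((J - R) * Q) *ᵥ x = μ • x) :
    μ.re ≤ 0 := by
  set y : Fin n → ℂ := toC Q *ᵥ x with hy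
  set c : ℂ := star x ⬝ᵥ (toC Q *ᵥ x) with hc
  have hQsymm : Qᵀ = Q := hQ.isHermitian
  have hcim : c.im = 0 := by
    rw [hc, toC_im, symm_dot Q hQsymm]; ring
  have hxre : (fun i => (x i).re) ≠ 0 ∨ (fun i => (x i).im) ≠ 0 := by
    by_contra h
    push_neg at h
    apply hx
    funext i
    have h1 := congrFun h.1 i
    have h2 := congrFun h.2 i
    simp at h1 h2
    exact Complex.ext h1 h2
  have hcre : 0 < c.re := by
    rw [hc, toC_re]
    rcases hxre with h | h
    · have h1 := hQ.dotProduct_mulVec_pos h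
      have h2 := hQ.posSemidef.dotProduct_mulVec_nonneg (fun i => (x i).im)
      simp only [star_trivial] at h1 h2
      linarith
    · have h1 := hQ.dotProduct_mulVec_pos h
      have h2 := hQ.posSemidef.dotProduct_mulVec_nonneg (fun i => (x i).re)
      simp only [star_trivial] at h1 h2
      linarith
  set s : ℂ := star y ⬝ᵥ (toC (J - R) *ᵥ y) with hs
  have hsval : s = μ * (star y ⬝ᵥ x) := by
    rw [hs, hy, Matrix.mulVec_mulVec, ← toC_mul, heig]
    rw [dotProduct_smul, smul_eq_mul]
  have hyx : star y ⬝ᵥ x = (starRingEnd ℂ) c := by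
    rw [hc, hy]
    simp [dotProduct, map_sum, mul_comm]
  have hsre : s.re ≤ 0 := by
    have hsub : toC (J - R) = toC J - toC R := by
      ext i j; simp [toC]
    rw [hs, hsub, Matrix.sub_mulVec, dotProduct_sub, Complex.sub_re, toC_re, toC_re]
    have h1 := skew_dot J hJ (fun i => (y i).re)
    have h2 := skew_dot J hJ (fun i => (y i).im)
    have h3 := hR.dotProduct_mulVec_nonneg (fun i => (y i).re)
    have h4 := hR.dotProduct_mulVec_nonneg (fun i => (y i).im)
    simp only [star_trivial] at h3 h4
    linarith
  have hkey : s.re = μ.re * c.re := by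
    rw [hsval, hyx]
    simp [Complex.mul_re, hcim]
  rw [hkey] at hsre
  nlinarith
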